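/- Let (Ω, 𝒜, P) be a probability space, let n, d ≥ 1 and 1 ≤ m ≤ d, let μ : Fin d → ℝ satisfy 0 < μ j < 1 for every j ≥ m, and let X : Fin n → Fin d → Ω → ℕ have left-repeated structure with midpoint m and parameter μ. Let θ : Ω → Bool satisfy P(θ = true) = 1/2 with θ independent of the whole family (X i j). Let y : Fin d → ℕ and k : Fin d → ℕ satisfy: y j ≤ 1 and y j ≤ k j ≤ n for every j ≥ m, and k j = k m and y j = y m for every j < m. Define E := {ω : if θ(ω) = true then for every j, y j + Σ_{i < n−1} X i j (ω) = k j, else for every j, Σ_{i < n} X i j (ω) = k j}. Then P(E) > 0, P(θ = true | E) < 1, and for every real threshold T: P(θ = true | E) / (1 − P(θ = true | E)) > T if and only if ∏_{j ≥ m} (if y j = 1 then (k j / n) / μ j else (1 − k j / n) / (1 − μ j)) > T. (Left/Right Distributed Correctness for the fixed side = left: the Bayesian posterior-odds attack with threshold T is equivalent to the likelihood ratio test attack clipped to attributes m through d with the same threshold.) -/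

import Mathlib

open MeasureTheory ProbabilityTheory Finset
open scoped ENNReal

lemma aux_blocks_prod {Ω : Type*} [MeasurableSpace Ω] (P : Measure Ω) [IsProbabilityMeasure P]
    {ι κ : Type*} (f : ι → Ω → ℕ) (hfm : ∀ i, Measurable (f i))
    (hind : iIndepFun f P)
    (J : Finset κ) (B : κ → Finset ι)
    (hdisj : ∀ j ∈ J, ∀ j' ∈ J, j ≠ j' → Disjoint (B j) (B j'))
    (c : κ → ℕ) :
    P (⋂ j ∈ J, {ω | ∑ i ∈ B j, f i ω = c j}) =
      ∏ j ∈ J, P {ω | ∑ i ∈ B j, f i ω = c j} := by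
  classical
  set m' : ι → MeasurableSpace Ω := fun i => MeasurableSpace.comap (f i) inferInstance with hm'
  have hiI : iIndep m' P := hind.iIndep
  have hle : ∀ i, m' i ≤ ‹MeasurableSpace Ω› := fun i => (hfm i).comap_le
  -- measurability of a block event wrt sup over a superset
  have key : ∀ (S : Set ι) (I : Finset ι), ↑I ⊆ S → ∀ t : ℕ,
      MeasurableSet[⨆ i ∈ S, m' i] {ω | ∑ i ∈ I, f i ω = t} := by
    intro S I hIS t
    have hsum : Measurable[⨆ i ∈ S, m' i] (fun ω => ∑ i ∈ I, f i ω) := by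
      apply Finset.measurable_sum
      intro i hi
      have h1 : Measurable[m' i] (f i) := fun s hs => ⟨s, hs, rfl⟩
      exact h1.mono (le_iSup₂ (f := fun i _ => m' i) i (hIS hi)) le_rfl
    exact hsum (Set.to_countable {t}).measurableSet
  induction J using Finset.induction with
  | empty => simp
  | @insert j0 J' hj0 ih =>
    have hST : Disjoint (↑(B j0) : Set ι) (↑(J'.biUnion B)) := by
      rw [Finset.disjoint_coe]
      simp only [Finset.disjoint_biUnion_right]
      intro j hj
      exact hdisj j0 (Finset.mem_insert_self _ _) j (Finset.mem_insert_of_mem hj)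
        (by rintro rfl; exact hj0 hj)
    have hIndep : Indep (⨆ i ∈ (↑(B j0) : Set ι), m' i) (⨆ i ∈ (↑(J'.biUnion B) : Set ι), m' i) P :=
      indep_iSup_of_disjoint hle hiI hST
    have h1 : MeasurableSet[⨆ i ∈ (↑(B j0) : Set ι), m' i] {ω | ∑ i ∈ B j0, f i ω = c j0} :=
      key _ _ (by simp) _
    have h2 : MeasurableSet[⨆ i ∈ (↑(J'.biUnion B) : Set ι), m' i]
        (⋂ j ∈ J', {ω | ∑ i ∈ B j, f i ω = c j}) := by
      refine MeasurableSet.biInter J'.countable_toSet (fun j hj => ?_)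
      exact key _ _ (fun i hi => by simpa using Finset.mem_biUnion.2 ⟨j, hj, hi⟩) _
    rw [Finset.set_biInter_insert, Finset.prod_insert hj0,
      ((Indep_iff _ _ _).1 hIndep _ _ h1 h2),
      ih (fun j hj j' hj' hne => hdisj j (Finset.mem_insert_of_mem hj) j'
        (Finset.mem_insert_of_mem hj') hne)]

lemma aux_binom_prob {Ω : Type*} [MeasurableSpace Ω] (P : Measure Ω) [IsProbabilityMeasure P]
    {ι : Type*} (f : ι → Ω → ℕ) (hfm : ∀ i, Measurable (f i))
    (hind : iIndepFun f P)
    (I : Finset ι) (q : ℝ)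
    (h01 : ∀ i ∈ I, ∀ ω, f i ω = 0 ∨ f i ω = 1)
    (hq : ∀ i ∈ I, (P {ω | f i ω = 1}).toReal = q) (c : ℕ) :
    (P {ω | ∑ i ∈ I, f i ω = c}).toReal =
      (I.card.choose c : ℝ) * q ^ c * (1 - q) ^ (I.card - c) := by
  classical
  set A : Finset ι → Set Ω := fun s => ⋂ i ∈ I, f i ⁻¹' {if i ∈ s then 1 else 0} with hA
  have hAmeas : ∀ s, MeasurableSet (A s) := fun s =>
    MeasurableSet.biInter I.countable_toSet fun i _ =>
      (hfm i) (Set.to_countable _).measurableSet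
  -- event decomposition
  have hdecomp : {ω | ∑ i ∈ I, f i ω = c} = ⋃ s ∈ I.powersetCard c, A s := by
    ext ω
    simp only [Set.mem_setOf_eq, Set.mem_iUnion, hA, Set.mem_iInter, Set.mem_preimage,
      Set.mem_singleton_iff, Finset.mem_powersetCard]
    constructor
    · intro h
      refine ⟨I.filter (fun i => f i ω = 1), ⟨Finset.filter_subset _ _, ?_⟩, ?_⟩
      · rw [Finset.card_filter]
        rw [← h]
        refine Finset.sum_congr rfl fun i hi => ?_
        rcases h01 i hi ω with h0 | h1
        · simp [h0]
        · simp [h1]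
      · intro i hi
        by_cases hmem : i ∈ I.filter (fun i => f i ω = 1)
        · simp only [hmem, if_true]
          exact (Finset.mem_filter.1 hmem).2
        · have : ¬ f i ω = 1 := fun h1 => hmem (Finset.mem_filter.2 ⟨hi, h1⟩)
          rcases h01 i hi ω with h0 | h1
          · simp [hmem, h0]
          · exact absurd h1 this
    · rintro ⟨s, ⟨hsub, hcard⟩, hval⟩
      have : ∑ i ∈ I, f i ω = ∑ i ∈ I, (if i ∈ s then 1 else 0) :=
        Finset.sum_congr rfl fun i hi => hval i hi
      rw [this, Finset.sum_ite_mem, Finset.inter_eq_right.2 hsub, ← hcard]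
      simp
  -- pairwise disjoint
  have hdisj : (↑(I.powersetCard c) : Set (Finset ι)).PairwiseDisjoint A := by
    intro s hs t ht hst
    simp only [Finset.mem_coe, Finset.mem_powersetCard] at hs ht
    have : ∃ i ∈ I, (i ∈ s ∧ i ∉ t) ∨ (i ∈ t ∧ i ∉ s) := by
      by_contra hcon
      push_neg at hcon
      apply hst
      ext i
      constructor
      · intro hi
        by_contra hit
        exact hit ((hcon i (hs.1 hi)).1 hi)
      · intro hi
        by_contra his
        exact his ((hcon i (ht.1 hi)).2 hi)
    obtain ⟨i, hiI, hcase⟩ := this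
    refine Set.disjoint_left.2 fun ω hωs hωt => ?_
    simp only [hA, Set.mem_iInter, Set.mem_preimage, Set.mem_singleton_iff] at hωs hωt
    have e1 := hωs i hiI
    have e2 := hωt i hiI
    rcases hcase with ⟨h1, h2⟩ | ⟨h1, h2⟩ <;> simp [h1, h2] at e1 e2 <;> omega
  -- atom probability
  have hatom : ∀ s ∈ I.powersetCard c,
      (P (A s)).toReal = q ^ c * (1 - q) ^ (I.card - c) := by
    intro s hs
    rw [Finset.mem_powersetCard] at hs
    have := hind.measure_inter_preimage_eq_mul I
      (sets := fun i => {if i ∈ s then 1 else 0})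
      (fun i _ => (Set.to_countable _).measurableSet)
    rw [hA]
    rw [this, ENNReal.toReal_prod]
    have hfac : ∀ i ∈ I, (P (f i ⁻¹' {if i ∈ s then 1 else 0})).toReal =
        if i ∈ s then q else 1 - q := by
      intro i hi
      by_cases hmem : i ∈ s
      · simp only [hmem, if_true]
        rw [← hq i hi]
        congr 1
      · simp only [hmem, if_false]
        have hcompl : f i ⁻¹' {0} = (f i ⁻¹' {1})ᶜ := by
          ext ω
          rcases h01 i hi ω with h0 | h1
          · simp [h0]
          · simp [h1]
        rw [hcompl, prob_compl_eq_one_sub ((hfm i) (Set.to_countable _).measurableSet),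
          ENNReal.toReal_sub_of_le prob_le_one (by simp), ENNReal.toReal_one]
        have hq' : (P (f i ⁻¹' {1})).toReal = q := hq i hi
        rw [hq']
    rw [Finset.prod_congr rfl hfac, Finset.prod_ite, Finset.prod_const, Finset.prod_const]
    have hc1 : (I.filter (fun i => i ∈ s)).card = c := by
      rw [Finset.filter_mem_eq_inter, Finset.inter_eq_right.2 hs.1, hs.2]
    have hc2 : (I.filter (fun i => i ∉ s)).card = I.card - c := by
      rw [Finset.filter_not, Finset.card_sdiff_of_subset (Finset.filter_subset _ _), hc1]
    rw [hc1, hc2]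
  -- put together
  rw [hdecomp, measure_biUnion_finset hdisj (fun s _ => hAmeas s), ENNReal.toReal_sum
    (fun s _ => measure_ne_top _ _)]
  rw [Finset.sum_congr rfl hatom, Finset.sum_const, Finset.card_powersetCard]
  simp [mul_assoc]
def LeftRepeated {Ω : Type*} [MeasurableSpace Ω] (P : Measure Ω)
    {n d : ℕ} (m : ℕ) (X : Fin n → Fin d → Ω → ℕ) (μ : Fin d → ℝ) : Prop :=
  (∀ i j, Measurable (X i j)) ∧
  iIndepFun
    (fun p : Fin n × {j : Fin d // m - 1 ≤ (j : ℕ)} => X p.1 p.2.1) P ∧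
  (∀ i, ∀ j : Fin d, m - 1 ≤ (j : ℕ) →
    (∀ ω, X i j ω = 0 ∨ X i j ω = 1) ∧ (P {ω | X i j ω = 1}).toReal = μ j) ∧
  (∀ i, ∀ j : Fin d, (j : ℕ) < m - 1 →
    ∀ jm : Fin d, (jm : ℕ) = m - 1 → X i j = X i jm)

/-- **Left/Right Distributed Correctness (fixed side = left).** On a population
whose attributes below the midpoint `m` are exact copies of attribute `m`, the
Bayesian posterior-odds attack with threshold `T` is equivalent to the
likelihood ratio test attack clipped to attributes `m` through `d` with the
same threshold. -/
theorem left_distributed_correctness {Ω : Type*} [MeasurableSpace Ω]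
    (P : Measure Ω) [IsProbabilityMeasure P] (n d m : ℕ)
    (hn : 1 ≤ n) (hd : 1 ≤ d) (hm : 1 ≤ m) (hmd : m ≤ d)
    (μ : Fin d → ℝ) (hμ : ∀ j : Fin d, m - 1 ≤ (j : ℕ) → 0 < μ j ∧ μ j < 1)
    (X : Fin n → Fin d → Ω → ℕ) (hX : LeftRepeated P m X μ)
    (θ : Ω → Bool) (hθmeas : Measurable θ)
    (hθhalf : (P {ω | θ ω = true}).toReal = 1 / 2)
    (hθindep : IndepFun θ (fun ω (p : Fin n × Fin d) => X p.1 p.2 ω) P)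
    (y : Fin d → ℕ) (k : Fin d → ℕ)
    (hyk : ∀ j : Fin d, m - 1 ≤ (j : ℕ) → y j ≤ 1 ∧ y j ≤ k j ∧ k j ≤ n)
    (hrep : ∀ j : Fin d, (j : ℕ) < m - 1 →
      k j = k ⟨m - 1, by omega⟩ ∧ y j = y ⟨m - 1, by omega⟩)
    (E : Set Ω)
    (hE : E = {ω | if θ ω = true
      then ∀ j, y j + ∑ i ∈ univ.filter (fun i : Fin n => (i : ℕ) < n - 1),
        X i j ω = k j
      else ∀ j, (∑ i : Fin n, X i j ω) = k j}) :
    0 < (P E).toReal ∧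
    (P[{ω | θ ω = true} | E]).toReal < 1 ∧
    ∀ T : ℝ,
      (P[{ω | θ ω = true} | E]).toReal /
          (1 - (P[{ω | θ ω = true} | E]).toReal) > T ↔
      (∏ j ∈ univ.filter (fun j : Fin d => m - 1 ≤ (j : ℕ)),
        (if y j = 1 then ((k j : ℝ) / n) / μ j
          else (1 - (k j : ℝ) / n) / (1 - μ j))) > T := by

  classical
  obtain ⟨hXm, hXind, hXber, hXcopy⟩ := hX
  set I1 : Finset (Fin n) := univ.filter (fun i : Fin n => (i : ℕ) < n - 1) with hI1
  have hjmlt : m - 1 < d := by omega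
  set jm : Fin d := ⟨m - 1, hjmlt⟩ with hjm
  have hjmge : m - 1 ≤ (jm : ℕ) := le_refl _
  set f : Fin n × {j : Fin d // m - 1 ≤ (j : ℕ)} → Ω → ℕ := fun p => X p.1 p.2.1 with hf
  have hfm : ∀ p, Measurable (f p) := fun p => hXm p.1 p.2.1
  set A : Set Ω := {ω | ∀ j, y j + ∑ i ∈ I1, X i j ω = k j} with hAdef
  set Bs : Set Ω := {ω | ∀ j, (∑ i : Fin n, X i j ω) = k j} with hBdef
  have hdisB : ∀ (I : Finset (Fin n)) (jj jj' : {j : Fin d // m - 1 ≤ (j : ℕ)}), jj ≠ jj' →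
      Disjoint (I.image (fun i => (i, jj))) (I.image (fun i => (i, jj'))) := by
    intro I jj jj' hne
    refine Finset.disjoint_left.2 fun p hp hp' => ?_
    simp only [Finset.mem_image] at hp hp'
    obtain ⟨i, -, rfl⟩ := hp
    obtain ⟨i', -, h⟩ := hp'
    exact hne ((congrArg Prod.snd h).symm)
  have hsum_im : ∀ (I : Finset (Fin n)) (jj : {j : Fin d // m - 1 ≤ (j : ℕ)}) (ω : Ω),
      ∑ p ∈ I.image (fun i => (i, jj)), f p ω = ∑ i ∈ I, X i jj.1 ω := by
    intro I jj ω
    rw [Finset.sum_image]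
    intro x _ y _ h
    exact congrArg Prod.fst h
  have hcard1 : I1.card = n - 1 := by
    have himg : I1 = (univ : Finset (Fin (n-1))).image (Fin.castLE (by omega)) := by
      ext i
      simp only [hI1, Finset.mem_filter, Finset.mem_univ, true_and, Finset.mem_image]
      constructor
      · intro h
        exact ⟨⟨(i : ℕ), h⟩, Fin.ext rfl⟩
      · rintro ⟨i', rfl⟩
        exact i'.2
    rw [himg, Finset.card_image_of_injective _ (Fin.castLE_injective _), Finset.card_univ,
      Fintype.card_fin]
  have hsumcopy : ∀ (I : Finset (Fin n)) (j : Fin d), (j : ℕ) < m - 1 → ∀ ω : Ω,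
      ∑ i ∈ I, X i j ω = ∑ i ∈ I, X i jm ω := by
    intro I j hj ω
    refine Finset.sum_congr rfl fun i _ => ?_
    rw [hXcopy i j hj jm rfl]
  -- event rewrites
  have hAeq : A = ⋂ jj ∈ (univ : Finset {j : Fin d // m - 1 ≤ (j : ℕ)}),
      {ω | ∑ p ∈ I1.image (fun i => (i, jj)), f p ω = k jj.1 - y jj.1} := by
    ext ω
    simp only [hAdef, Set.mem_setOf_eq, Set.mem_iInter, Finset.mem_univ, forall_true_left]
    constructor
    · intro h jj
      rw [hsum_im I1 jj ω]
      have h1 := h jj.1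
      have h2 := (hyk jj.1 jj.2).2.1
      omega
    · intro h j
      by_cases hj : m - 1 ≤ (j : ℕ)
      · have h1 := h ⟨j, hj⟩
        rw [hsum_im I1 ⟨j, hj⟩ ω] at h1
        have h1' : ∑ i ∈ I1, X i j ω = k j - y j := h1
        have h2 := (hyk j hj).2.1
        omega
      · have h1 := h ⟨jm, hjmge⟩
        rw [hsum_im I1 ⟨jm, hjmge⟩ ω] at h1
        have h1' : ∑ i ∈ I1, X i jm ω = k jm - y jm := h1
        obtain ⟨hk1, hy1⟩ := hrep j (by omega)
        have hk2 : k j = k jm := hk1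
        have hy2 : y j = y jm := hy1
        have h2 := (hyk jm hjmge).2.1
        rw [hsumcopy I1 j (by omega) ω, hk2, hy2]
        omega
  have hBeq : Bs = ⋂ jj ∈ (univ : Finset {j : Fin d // m - 1 ≤ (j : ℕ)}),
      {ω | ∑ p ∈ (univ : Finset (Fin n)).image (fun i => (i, jj)), f p ω = k jj.1} := by
    ext ω
    simp only [hBdef, Set.mem_setOf_eq, Set.mem_iInter, Finset.mem_univ, forall_true_left]
    constructor
    · intro h jj
      rw [hsum_im univ jj ω]
      exact h jj.1
    · intro h j
      by_cases hj : m - 1 ≤ (j : ℕ)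
      · have h1 := h ⟨j, hj⟩
        rw [hsum_im univ ⟨j, hj⟩ ω] at h1
        exact h1
      · have h1 := h ⟨jm, hjmge⟩
        rw [hsum_im univ ⟨jm, hjmge⟩ ω] at h1
        have h1' : ∑ i ∈ (univ : Finset (Fin n)), X i jm ω = k jm := h1
        obtain ⟨hk1, -⟩ := hrep j (by omega)
        have hk2 : k j = k jm := hk1
        rw [hsumcopy univ j (by omega) ω, hk2]
        exact h1'
  -- probabilities of A and Bs
  have hPAprod : P (⋂ jj ∈ (univ : Finset {j : Fin d // m - 1 ≤ (j : ℕ)}),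
      {ω | ∑ p ∈ I1.image (fun i => (i, jj)), f p ω = k jj.1 - y jj.1}) =
      ∏ jj : {j : Fin d // m - 1 ≤ (j : ℕ)},
        P {ω | ∑ p ∈ I1.image (fun i => (i, jj)), f p ω = k jj.1 - y jj.1} :=
    aux_blocks_prod P f hfm hXind univ _ (fun jj _ jj' _ hne => hdisB I1 jj jj' hne) _
  have hPBprod : P (⋂ jj ∈ (univ : Finset {j : Fin d // m - 1 ≤ (j : ℕ)}),
      {ω | ∑ p ∈ (univ : Finset (Fin n)).image (fun i => (i, jj)), f p ω = k jj.1}) =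
      ∏ jj : {j : Fin d // m - 1 ≤ (j : ℕ)},
        P {ω | ∑ p ∈ (univ : Finset (Fin n)).image (fun i => (i, jj)), f p ω = k jj.1} :=
    aux_blocks_prod P f hfm hXind univ _ (fun jj _ jj' _ hne => hdisB univ jj jj' hne) _
  have hbin : ∀ (I : Finset (Fin n)) (jj : {j : Fin d // m - 1 ≤ (j : ℕ)}) (c : ℕ),
      (P {ω | ∑ p ∈ I.image (fun i => (i, jj)), f p ω = c}).toReal =
      ((I.card.choose c : ℝ)) * μ jj.1 ^ c * (1 - μ jj.1) ^ (I.card - c) := by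
    intro I jj c
    have hcardim : (I.image (fun i => (i, jj))).card = I.card :=
      Finset.card_image_of_injective _ (fun a b h => congrArg Prod.fst h)
    have h01 : ∀ p ∈ I.image (fun i => (i, jj)), ∀ ω, f p ω = 0 ∨ f p ω = 1 := by
      intro p hp ω
      obtain ⟨i, -, rfl⟩ := Finset.mem_image.1 hp
      exact (hXber i jj.1 jj.2).1 ω
    have hqv : ∀ p ∈ I.image (fun i => (i, jj)), (P {ω | f p ω = 1}).toReal = μ jj.1 := by
      intro p hp
      obtain ⟨i, -, rfl⟩ := Finset.mem_image.1 hp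
      exact (hXber i jj.1 jj.2).2
    rw [aux_binom_prob P f hfm hXind _ _ h01 hqv c, hcardim]
  have haR : (P A).toReal = ∏ jj : {j : Fin d // m - 1 ≤ (j : ℕ)},
      (((n-1).choose (k jj.1 - y jj.1) : ℝ) * μ jj.1 ^ (k jj.1 - y jj.1) *
        (1 - μ jj.1) ^ ((n-1) - (k jj.1 - y jj.1))) := by
    rw [hAeq, hPAprod, ENNReal.toReal_prod]
    refine Finset.prod_congr rfl fun jj _ => ?_
    rw [hbin I1 jj _, hcard1]
  have hbRformula : (P Bs).toReal = ∏ jj : {j : Fin d // m - 1 ≤ (j : ℕ)},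
      ((n.choose (k jj.1) : ℝ) * μ jj.1 ^ (k jj.1) * (1 - μ jj.1) ^ (n - k jj.1)) := by
    rw [hBeq, hPBprod, ENNReal.toReal_prod]
    refine Finset.prod_congr rfl fun jj _ => ?_
    rw [hbin univ jj _, Finset.card_univ, Fintype.card_fin]
  -- per-attribute factor identity
  have hfac : ∀ jj : {j : Fin d // m - 1 ≤ (j : ℕ)},
      (((n-1).choose (k jj.1 - y jj.1) : ℝ) * μ jj.1 ^ (k jj.1 - y jj.1) *
        (1 - μ jj.1) ^ ((n-1) - (k jj.1 - y jj.1))) =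
      ((n.choose (k jj.1) : ℝ) * μ jj.1 ^ (k jj.1) * (1 - μ jj.1) ^ (n - k jj.1)) *
        (if y jj.1 = 1 then ((k jj.1 : ℝ) / n) / μ jj.1
          else (1 - (k jj.1 : ℝ) / n) / (1 - μ jj.1)) := by
    intro jj
    obtain ⟨hY1, hYK, hKn⟩ := hyk jj.1 jj.2
    obtain ⟨hq0, hq1⟩ := hμ jj.1 jj.2
    set K := k jj.1 with hKdef
    set Y := y jj.1 with hYdef
    set q := μ jj.1 with hqdef
    have hnR : (0:ℝ) < n := by exact_mod_cast hn
    have hnR' : (n:ℝ) ≠ 0 := ne_of_gt hnR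
    have hq1' : (0:ℝ) < 1 - q := by linarith
    by_cases hY : Y = 1
    · have hK1 : 1 ≤ K := by omega
      have hid : (n:ℝ) * ((n-1).choose (K-1) : ℝ) = (n.choose K : ℝ) * (K : ℝ) := by
        have h := Nat.add_one_mul_choose_eq (n-1) (K-1)
        have e1 : n - 1 + 1 = n := by omega
        have e2 : K - 1 + 1 = K := by omega
        rw [e1, e2] at h
        exact_mod_cast h
      have e3 : K - Y = K - 1 := by omega
      have e4 : (n-1) - (K-1) = n - K := by omega
      rw [e3, e4, if_pos hY]
      have hC1 : ((n-1).choose (K-1) : ℝ) = (n.choose K : ℝ) * K / n := by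
        field_simp
        linarith [hid]
      have e5 : q ^ K = q ^ (K-1) * q := by
        rw [← pow_succ]
        congr 1
        omega
      rw [hC1, e5]
      have hq0' : q ≠ 0 := ne_of_gt hq0
      field_simp
    · have hY0 : Y = 0 := by omega
      by_cases hKn' : K = n
      · have hch : (n-1).choose (K - Y) = 0 := by
          apply Nat.choose_eq_zero_of_lt
          omega
        rw [hch, if_neg hY]
        have hKd : (K:ℝ)/n = 1 := by rw [hKn']; field_simp
        rw [hKd]
        simp
      · have hid : ((n-1).choose K : ℝ) * n = (n.choose K : ℝ) * ((n:ℝ) - K) := by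
          have h := Nat.choose_mul_succ_eq (n-1) K
          have e1 : n - 1 + 1 = n := by omega
          rw [e1] at h
          have h2 := congrArg (fun t : ℕ => (t : ℝ)) h
          push_cast [Nat.cast_sub hKn] at h2
          linarith [h2]
        have e3 : K - Y = K := by omega
        have e4 : n - K = ((n-1) - K) + 1 := by omega
        rw [e3, if_neg hY, e4, pow_succ]
        have hC1 : ((n-1).choose K : ℝ) = (n.choose K : ℝ) * ((n:ℝ) - K) / n := by
          field_simp
          linarith [hid]
        rw [hC1]
        field_simp
  -- θ probabilities
  have hmT : MeasurableSet {ω | θ ω = true} :=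
    hθmeas (show MeasurableSet {true} from (Set.to_countable _).measurableSet)
  have hmF : MeasurableSet {ω | θ ω = false} :=
    hθmeas (show MeasurableSet {false} from (Set.to_countable _).measurableSet)
  have hθtrue : P {ω | θ ω = true} = 1/2 := by
    have h1 : (P {ω | θ ω = true}).toReal = ((1:ℝ≥0∞)/2).toReal := by
      rw [hθhalf]
      simp [ENNReal.toReal_div]
    exact (ENNReal.toReal_eq_toReal_iff' (measure_ne_top _ _) (by simp)).1 h1
  have hθfalse : P {ω | θ ω = false} = 1/2 := by
    have hc : {ω | θ ω = false} = {ω | θ ω = true}ᶜ := by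
      ext ω; cases h : θ ω <;> simp [h]
    rw [hc, prob_compl_eq_one_sub hmT, hθtrue]
    rw [ENNReal.sub_half ENNReal.one_ne_top]
  -- independence of θ and the events A, Bs
  have hgmeas : Measurable (fun ω (p : Fin n × Fin d) => X p.1 p.2 ω) :=
    measurable_pi_lambda _ (fun p => hXm p.1 p.2)
  have hSA : MeasurableSet {v : (Fin n × Fin d) → ℕ | ∀ j, y j + ∑ i ∈ I1, v (i, j) = k j} := by
    have heq : {v : (Fin n × Fin d) → ℕ | ∀ j, y j + ∑ i ∈ I1, v (i, j) = k j} =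
        ⋂ j : Fin d, (fun v : (Fin n × Fin d) → ℕ => ∑ i ∈ I1, v (i, j)) ⁻¹'
          {z | y j + z = k j} := by
      ext v; simp [Set.mem_iInter]
    rw [heq]
    refine MeasurableSet.iInter fun j => ?_
    have hms : Measurable (fun v : (Fin n × Fin d) → ℕ => ∑ i ∈ I1, v (i, j)) :=
      Finset.measurable_sum I1 (fun i _ => measurable_pi_apply (i, j))
    exact hms ((Set.to_countable _).measurableSet)
  have hSB : MeasurableSet {v : (Fin n × Fin d) → ℕ | ∀ j, ∑ i : Fin n, v (i, j) = k j} := by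
    have heq : {v : (Fin n × Fin d) → ℕ | ∀ j, ∑ i : Fin n, v (i, j) = k j} =
        ⋂ j : Fin d, (fun v : (Fin n × Fin d) → ℕ => ∑ i : Fin n, v (i, j)) ⁻¹'
          {z | z = k j} := by
      ext v; simp [Set.mem_iInter]
    rw [heq]
    refine MeasurableSet.iInter fun j => ?_
    have hms : Measurable (fun v : (Fin n × Fin d) → ℕ => ∑ i : Fin n, v (i, j)) :=
      Finset.measurable_sum univ (fun i _ => measurable_pi_apply (i, j))
    exact hms ((Set.to_countable _).measurableSet)
  have hApre : A = (fun ω (p : Fin n × Fin d) => X p.1 p.2 ω) ⁻¹'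
      {v | ∀ j, y j + ∑ i ∈ I1, v (i, j) = k j} := rfl
  have hBpre : Bs = (fun ω (p : Fin n × Fin d) => X p.1 p.2 ω) ⁻¹'
      {v | ∀ j, ∑ i : Fin n, v (i, j) = k j} := rfl
  have hmA : MeasurableSet A := by rw [hApre]; exact hgmeas hSA
  have hmB : MeasurableSet Bs := by rw [hBpre]; exact hgmeas hSB
  have hPTA : P ({ω | θ ω = true} ∩ A) = P {ω | θ ω = true} * P A := by
    have hT : {ω | θ ω = true} = θ ⁻¹' {true} := rfl
    rw [hT, hApre]
    exact hθindep.measure_inter_preimage_eq_mul _ _ ((Set.to_countable _).measurableSet) hSA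
  have hPFB : P ({ω | θ ω = false} ∩ Bs) = P {ω | θ ω = false} * P Bs := by
    have hF : {ω | θ ω = false} = θ ⁻¹' {false} := rfl
    rw [hF, hBpre]
    exact hθindep.measure_inter_preimage_eq_mul _ _ ((Set.to_countable _).measurableSet) hSB
  -- decomposition of E
  have hEdec : E = ({ω | θ ω = true} ∩ A) ∪ ({ω | θ ω = false} ∩ Bs) := by
    rw [hE]
    ext ω
    by_cases h : θ ω = true
    · simp [h, hAdef, Set.mem_setOf_eq]
    · rw [Bool.not_eq_true] at h
      simp [h, hBdef, Set.mem_setOf_eq]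
  have hdisjTF : Disjoint ({ω | θ ω = true} ∩ A) ({ω | θ ω = false} ∩ Bs) := by
    refine Set.disjoint_left.2 fun ω h1 h2 => ?_
    have ht : θ ω = true := h1.1
    have hfa : θ ω = false := h2.1
    rw [ht] at hfa
    exact Bool.noConfusion hfa
  have hPE : P E = 1/2 * P A + 1/2 * P Bs := by
    rw [hEdec, measure_union hdisjTF (hmF.inter hmB), hPTA, hPFB, hθtrue, hθfalse]
  have hEmeas : MeasurableSet E := by
    rw [hEdec]; exact (hmT.inter hmA).union (hmF.inter hmB)
  have hEtrue : E ∩ {ω | θ ω = true} = {ω | θ ω = true} ∩ A := by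
    rw [hEdec]
    ext ω
    constructor
    · rintro ⟨hu, ht⟩
      have ht' : θ ω = true := ht
      rcases hu with h | h
      · exact h
      · have hfa : θ ω = false := h.1
        rw [ht'] at hfa
        exact Bool.noConfusion hfa
    · intro h
      exact ⟨Or.inl h, h.1⟩
  -- real-valued computations
  set a := (P A).toReal with hadef
  set b := (P Bs).toReal with hbdef
  have hanneg : 0 ≤ a := ENNReal.toReal_nonneg
  have hbpos : 0 < b := by
    rw [hbRformula]
    refine Finset.prod_pos fun jj _ => ?_
    obtain ⟨hq0, hq1⟩ := hμ jj.1 jj.2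
    obtain ⟨-, -, hKn⟩ := hyk jj.1 jj.2
    have hch : 0 < (n.choose (k jj.1) : ℝ) := by exact_mod_cast Nat.choose_pos hKn
    have : (0:ℝ) < 1 - μ jj.1 := by linarith
    positivity
  have hsub : ∏ j ∈ univ.filter (fun j : Fin d => m - 1 ≤ (j : ℕ)),
      (if y j = 1 then ((k j : ℝ) / n) / μ j else (1 - (k j : ℝ) / n) / (1 - μ j)) =
      ∏ jj : {j : Fin d // m - 1 ≤ (j : ℕ)},
      (if y jj.1 = 1 then ((k jj.1 : ℝ) / n) / μ jj.1
        else (1 - (k jj.1 : ℝ) / n) / (1 - μ jj.1)) :=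
    Finset.prod_subtype _ (fun j => by simp) _
  have hab : a = b * ∏ j ∈ univ.filter (fun j : Fin d => m - 1 ≤ (j : ℕ)),
      (if y j = 1 then ((k j : ℝ) / n) / μ j else (1 - (k j : ℝ) / n) / (1 - μ j)) := by
    rw [haR, hbRformula, hsub, ← Finset.prod_mul_distrib]
    exact Finset.prod_congr rfl fun jj _ => hfac jj
  have hPAne : P A ≠ ⊤ := measure_ne_top _ _
  have hPBne : P Bs ≠ ⊤ := measure_ne_top _ _
  have hPEtoReal : (P E).toReal = (a + b) / 2 := by
    rw [hPE, ENNReal.toReal_add (ENNReal.mul_ne_top (by simp) hPAne)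
      (ENNReal.mul_ne_top (by simp) hPBne), ENNReal.toReal_mul, ENNReal.toReal_mul]
    have h12 : ((1:ℝ≥0∞)/2).toReal = 1/2 := by simp [ENNReal.toReal_div]
    rw [h12, ← hadef, ← hbdef]
    ring
  have hPEpos : 0 < (P E).toReal := by
    rw [hPEtoReal]; linarith
  have habpos : 0 < a + b := by linarith
  have hcondval : (P[{ω | θ ω = true} | E]).toReal = a / (a + b) := by
    rw [cond_apply hEmeas P, hEtrue, hPTA, hθtrue, ENNReal.toReal_mul, ENNReal.toReal_inv,
      ENNReal.toReal_mul, hPEtoReal]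
    have h12 : ((1:ℝ≥0∞)/2).toReal = 1/2 := by simp [ENNReal.toReal_div]
    rw [h12, ← hadef]
    field_simp
  refine ⟨hPEpos, ?_, ?_⟩
  · rw [hcondval, div_lt_one habpos]
    linarith
  · intro T
    rw [hcondval]
    have h1q : 1 - a / (a + b) = b / (a + b) := by
      field_simp
      ring
    rw [h1q]
    have hdd : a / (a + b) / (b / (a + b)) = a / b := by
      rw [div_div_div_cancel_right₀]
      exact ne_of_gt habpos
    have hfin : a / b = ∏ j ∈ univ.filter (fun j : Fin d => m - 1 ≤ (j : ℕ)),
        (if y j = 1 then ((k j : ℝ) / n) / μ j else (1 - (k j : ℝ) / n) / (1 - μ j)) := by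
      rw [hab, mul_comm, mul_div_assoc, div_self (ne_of_gt hbpos), mul_one]
    rw [hdd, hfin]
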